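/- Let γ > 0 and α, β > 0. Let u : (0,1) → (0,∞) be measurable with ∫_0^1 u(t) dt finite and positive and ∫_0^1 u(t)^{−γ} dt finite. Then α·(∫_0^1 u(t) dt)^{−γ} − β·(∫_0^1 u(t) dt)^{γ} ≤ (α+β)·∫_0^1 u(t)^{−γ} dt − 2β. (Continuous version of the convex-like Jensen inequality.) -/

import Mathlib

open MeasureTheory Real

/-- Tangent line inequality for `x ↦ x^{-γ}` at `a`. -/
lemma rpow_neg_tangent {γ a x : ℝ} (hγ : 0 < γ) (ha : 0 < a) (hx : 0 < x) :
    a ^ (-γ) - γ * a ^ (-γ) * (x / a - 1) ≤ x ^ (-γ) := by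
  have h0 : 0 < x / a := div_pos hx ha
  have hlog : Real.log (x / a) ≤ x / a - 1 := Real.log_le_sub_one_of_pos h0
  have hexp : (-γ * Real.log (x / a)) + 1 ≤ Real.exp (-γ * Real.log (x / a)) :=
    Real.add_one_le_exp _
  have heq : Real.exp (-γ * Real.log (x / a)) = (x / a) ^ (-γ) := by
    rw [Real.rpow_def_of_pos h0, mul_comm]
  have h1 : 1 - γ * (x / a - 1) ≤ (x / a) ^ (-γ) := by
    nlinarith [hγ.le]
  have h2 : (x / a) ^ (-γ) = x ^ (-γ) / a ^ (-γ) := Real.div_rpow hx.le ha.le _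
  have h3 : 0 < a ^ (-γ) := Real.rpow_pos_of_pos ha _
  rw [h2] at h1
  have := mul_le_mul_of_nonneg_left h1 h3.le
  calc a ^ (-γ) - γ * a ^ (-γ) * (x / a - 1)
      = a ^ (-γ) * (1 - γ * (x / a - 1)) := by ring
    _ ≤ a ^ (-γ) * (x ^ (-γ) / a ^ (-γ)) := this
    _ = x ^ (-γ) := by field_simp

/-- Continuous version of the convex-like Jensen inequality: for `γ > 0`,
`α, β > 0` and a measurable positive `u : (0,1) → (0,∞)` with
`∫₀¹ u` finite and positive and `∫₀¹ u^{-γ}` finite,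
`α (∫₀¹ u)^{-γ} − β (∫₀¹ u)^{γ} ≤ (α+β) ∫₀¹ u^{-γ} − 2β`. -/
theorem convexlike_jensen_integral (γ α β : ℝ)
    (hγ : 0 < γ) (hα : 0 < α) (hβ : 0 < β)
    (u : ℝ → ℝ) (hmeas : Measurable u)
    (hupos : ∀ t ∈ Set.Ioo (0 : ℝ) 1, 0 < u t)
    (huint : IntegrableOn u (Set.Ioo (0 : ℝ) 1))
    (hIpos : 0 < ∫ t in Set.Ioo (0 : ℝ) 1, u t)
    (huinv : IntegrableOn (fun t => u t ^ (-γ)) (Set.Ioo (0 : ℝ) 1)) :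
    α * (∫ t in Set.Ioo (0 : ℝ) 1, u t) ^ (-γ) -
        β * (∫ t in Set.Ioo (0 : ℝ) 1, u t) ^ γ ≤
      (α + β) * (∫ t in Set.Ioo (0 : ℝ) 1, u t ^ (-γ)) - 2 * β := by
  set I : ℝ := ∫ t in Set.Ioo (0 : ℝ) 1, u t with hI
  set J : ℝ := ∫ t in Set.Ioo (0 : ℝ) 1, u t ^ (-γ) with hJdef
  have hvol : (volume (Set.Ioo (0 : ℝ) 1)).toReal = 1 := by simp
  have hIinvpos : 0 < I ^ (-γ) := Real.rpow_pos_of_pos hIpos _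
  -- Jensen: I^{-γ} ≤ J
  have hJensen : I ^ (-γ) ≤ J := by
    have hgint : IntegrableOn
        (fun t => I ^ (-γ) - γ * I ^ (-γ) * (u t / I - 1)) (Set.Ioo (0 : ℝ) 1) := by
      have : IntegrableOn
          (fun t => (I ^ (-γ) + γ * I ^ (-γ)) - (γ * I ^ (-γ) / I) * u t)
          (Set.Ioo (0 : ℝ) 1) :=
        (integrableOn_const (by simp) (by simp)).sub (huint.const_mul _)
      refine this.congr_fun (fun t _ => by field_simp; ring) measurableSet_Ioo
    have hmono : ∫ t in Set.Ioo (0 : ℝ) 1, (I ^ (-γ) - γ * I ^ (-γ) * (u t / I - 1)) ≤ J :=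
      setIntegral_mono_on hgint huinv measurableSet_Ioo
        (fun t ht => rpow_neg_tangent hγ hIpos (hupos t ht))
    have hcalc : ∫ t in Set.Ioo (0 : ℝ) 1, (I ^ (-γ) - γ * I ^ (-γ) * (u t / I - 1))
        = I ^ (-γ) := by
      have h1 : ∀ t, I ^ (-γ) - γ * I ^ (-γ) * (u t / I - 1)
          = (I ^ (-γ) + γ * I ^ (-γ)) - (γ * I ^ (-γ) / I) * u t := by
        intro t; field_simp; ring
      simp_rw [h1]
      rw [integral_sub (integrableOn_const (μ := volume) (s := Set.Ioo (0 : ℝ) 1)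
        (C := I ^ (-γ) + γ * I ^ (-γ)) (by simp) (by simp)) (huint.const_mul _),
        setIntegral_const, integral_const_mul, measureReal_def, hvol, ← hI]
      field_simp
      rw [one_smul]; ring
    linarith
  -- AM-GM: I^γ + I^{-γ} ≥ 2
  have hAM : 2 ≤ I ^ γ + I ^ (-γ) := by
    have h1 : I ^ (-γ) = (I ^ γ)⁻¹ := by
      rw [Real.rpow_neg hIpos.le]
    have h2 : 0 < I ^ γ := Real.rpow_pos_of_pos hIpos _
    rw [h1]
    have h3 : I ^ γ * (I ^ γ)⁻¹ = 1 := mul_inv_cancel₀ h2.ne'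
    nlinarith [sq_nonneg (I ^ γ - 1)]
  nlinarith [hJensen, hAM, hIinvpos, hα.le, hβ.le]
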